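/- Let A be a unital C*-algebra, π : Mₙ(ℂ) → A a *-homomorphism and γ : Mₙ(ℂ) → A a *-antihomomorphism with elementwise commuting ranges, and let q := n^{-1} Σ_{i,j} γ(e_{ij}) π(e_{ji}) where (e_{ij}) are the standard matrix units. Then q is a self-adjoint projection (q = q* = q²). -/

import Mathlib

/-- Let `A` be a unital C*-algebra, `π : Mₙ(ℂ) → A` a *-homomorphism and
`γ : Mₙ(ℂ) → A` a *-antihomomorphism with elementwise commuting ranges, and
`q := n⁻¹ Σ_{i,j} γ(e i j) π(e j i)` where `(e i j)` are the standard matrix units.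
Then `q` is a self-adjoint projection: `q = q* = q²`. -/
theorem stmt4 {A : Type*} [CStarAlgebra A] {n : ℕ}
    (π : Matrix (Fin n) (Fin n) ℂ →⋆ₙₐ[ℂ] A)
    (γ : Matrix (Fin n) (Fin n) ℂ →ₗ[ℂ] A)
    (hγmul : ∀ x y : Matrix (Fin n) (Fin n) ℂ, γ (x * y) = γ y * γ x)
    (hγstar : ∀ x : Matrix (Fin n) (Fin n) ℂ, γ (star x) = star (γ x))
    (hcomm : ∀ x y : Matrix (Fin n) (Fin n) ℂ, γ x * π y = π y * γ x)
    (E : Fin n → Fin n → Matrix (Fin n) (Fin n) ℂ)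
    (hE : ∀ i j, E i j = Matrix.single i j 1)
    (q : A)
    (hq : q = (n : ℂ)⁻¹ • ∑ i, ∑ j, γ (E i j) * π (E j i)) :
    star q = q ∧ q * q = q := by
  rcases Nat.eq_zero_or_pos n with hn | hn
  · subst hn
    simp only [Finset.univ_eq_empty, Finset.sum_empty, smul_zero] at hq
    simp [hq]
  have hnC : (n : ℂ) ≠ 0 := Nat.cast_ne_zero.mpr hn.ne'
  have hstarE : ∀ i j, star (E i j) = E j i := by
    intro i j
    ext a b
    simp [hE, Matrix.star_eq_conjTranspose, Matrix.conjTranspose_apply,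
      Matrix.single, and_comm, apply_ite]
  have hmulE : ∀ i j k l : Fin n, E i j * E k l = if j = k then E i l else 0 := by
    intro i j k l
    by_cases h : j = k
    · subst h; simp [hE]
    · simp [hE, Matrix.single_mul_single_of_ne (h := h), h]
  constructor
  · rw [hq, star_smul, star_sum]
    have h1 : ∀ i : Fin n, star (∑ j, γ (E i j) * π (E j i))
        = ∑ j, γ (E j i) * π (E i j) := by
      intro i
      rw [star_sum]
      refine Finset.sum_congr rfl fun j _ => ?_
      rw [star_mul, ← map_star π, ← hγstar, hstarE, hstarE, hcomm]
    simp only [h1]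
    rw [Finset.sum_comm]
    congr 1
    simp
  · have key : ∀ i j k l : Fin n, (γ (E i j) * π (E j i)) * (γ (E k l) * π (E l k))
        = if l = i then γ (E k j) * π (E j k) else 0 := by
      intro i j k l
      have h1 : (γ (E i j) * π (E j i)) * (γ (E k l) * π (E l k))
          = (γ (E i j) * γ (E k l)) * (π (E j i) * π (E l k)) := by
        rw [mul_assoc, ← mul_assoc (π (E j i)), ← hcomm, mul_assoc, ← mul_assoc]
      rw [h1, ← hγmul, ← map_mul, hmulE, hmulE]
      by_cases h : l = i
      · simp [h]
      · have h' : ¬ i = l := fun hh => h hh.symm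
        simp [h, h']
    have hSS : (∑ i, ∑ j, γ (E i j) * π (E j i)) * (∑ i, ∑ j, γ (E i j) * π (E j i))
        = (n : ℂ) • ∑ i, ∑ j, γ (E i j) * π (E j i) := by
      simp_rw [Finset.sum_mul, Finset.mul_sum, key, Finset.sum_ite_eq', Finset.mem_univ, if_true,
        Finset.sum_const, Finset.card_univ, Fintype.card_fin]
      rw [Finset.sum_comm, Nat.cast_smul_eq_nsmul]
    rw [hq, smul_mul_smul_comm, hSS, smul_smul]
    congr 1
    field_simp
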